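/- Let H be a factorial commutative cancellative monoid and M a submonoid of H containing every unit of H. Then the following are equivalent: (i) for every a ∈ H and every square-free b ∈ H, a²·b ∈ M implies a ∈ M and a·b ∈ M; (v) for every a ∈ H and every square-free b ∈ H such that a divides bⁿ for some n ≥ 1, a·b ∈ M implies a ∈ M and b ∈ M. -/

import Mathlib

open UniqueFactorizationMonoid

namespace Stmt7Aux

variable {H : Type*} [CancelCommMonoid H]

instance instLCWZ : IsLeftCancelMulZero (WithZero H) where
  mul_left_cancel_of_ne_zero := by
    intro a ha b c (h : a * b = a * c)
    induction a with
    | zero => exact absurd rfl ha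
    | coe a =>
      induction b with
      | zero =>
        rw [mul_zero] at h
        rcases mul_eq_zero.mp h.symm with h' | h'
        · exact absurd h' ha
        · exact h'.symm
      | coe b =>
        induction c with
        | zero =>
          rw [mul_zero] at h
          rcases mul_eq_zero.mp h with h' | h'
          · exact absurd h' ha
          · exact absurd h' WithZero.coe_ne_zero
        | coe c =>
          rw [← WithZero.coe_mul, ← WithZero.coe_mul, WithZero.coe_inj] at h
          exact congrArg _ (mul_left_cancel h)

instance : IsCancelMulZero (WithZero H) := IsLeftCancelMulZero.to_isCancelMulZero

theorem coe_dvd' {x y : H} : (x : WithZero H) ∣ (y : WithZero H) ↔ x ∣ y := by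
  constructor
  · rintro ⟨c, hc⟩
    induction c with
    | zero => rw [mul_zero] at hc; exact absurd hc WithZero.coe_ne_zero
    | coe c =>
      rw [← WithZero.coe_mul, WithZero.coe_inj] at hc
      exact ⟨c, hc⟩
  · rintro ⟨c, rfl⟩
    exact ⟨c, by rw [WithZero.coe_mul]⟩

theorem isUnit_coe' {x : H} : IsUnit (x : WithZero H) ↔ IsUnit x := by
  rw [isUnit_iff_exists_inv, isUnit_iff_exists_inv]
  constructor
  · rintro ⟨c, hc⟩
    induction c with
    | zero => rw [mul_zero] at hc; exact absurd hc.symm one_ne_zero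
    | coe c =>
      rw [← WithZero.coe_mul, ← WithZero.coe_one, WithZero.coe_inj] at hc
      exact ⟨c, hc⟩
  · rintro ⟨c, hc⟩
    exact ⟨c, by rw [← WithZero.coe_mul, hc, WithZero.coe_one]⟩

theorem squarefree_coe' {x : H} : Squarefree (x : WithZero H) ↔ Squarefree x := by
  constructor
  · intro h b hb
    exact isUnit_coe'.mp (h b (by rw [← WithZero.coe_mul]; exact coe_dvd'.mpr hb))
  · intro h c hc
    induction c with
    | zero =>
      rw [mul_zero] at hc
      exact absurd (zero_dvd_iff.mp hc) WithZero.coe_ne_zero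
    | coe c =>
      rw [← WithZero.coe_mul] at hc
      exact isUnit_coe'.mpr (h c (coe_dvd'.mp hc))

theorem assoc_of_dvd_dvd' {x y : H} (h1 : x ∣ y) (h2 : y ∣ x) : Associated x y := by
  obtain ⟨c, hc⟩ := h1
  obtain ⟨d, hd⟩ := h2
  have : x * (c * d) = x * 1 := by
    rw [mul_one, ← mul_assoc, ← hc, ← hd]
  have hcd : c * d = 1 := mul_left_cancel this
  exact ⟨(IsUnit.of_mul_eq_one (a := c) d hcd).unit, by simp [hc]⟩

theorem associated_coe' {x y : H} (h : Associated (x : WithZero H) (y : WithZero H)) :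
    Associated x y :=
  assoc_of_dvd_dvd' (coe_dvd'.mp h.dvd) (coe_dvd'.mp h.symm.dvd)

theorem memM_assoc (M : Submonoid H) (hunits : ∀ u : H, IsUnit u → u ∈ M) {x y : H}
    (hx : x ∈ M) (h : Associated x y) : y ∈ M := by
  obtain ⟨u, hu⟩ := h
  rw [← hu]
  exact M.mul_mem hx (hunits _ u.isUnit)

def HFact (H : Type*) [CancelCommMonoid H] : Prop :=
  ∀ a : H, IsUnit a ∨ ∃ l : Multiset H,
    (∀ p ∈ l, ¬ IsUnit p ∧ ∀ b c : H, p ∣ b * c → p ∣ b ∨ p ∣ c) ∧ l.prod = a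

theorem prime_coe {p : H} (hp : ¬ IsUnit p ∧ ∀ b c : H, p ∣ b * c → p ∣ b ∨ p ∣ c) :
    Prime (p : WithZero H) := by
  refine ⟨WithZero.coe_ne_zero, fun h => hp.1 (isUnit_coe'.mp h), fun b c hbc => ?_⟩
  induction b with
  | zero => exact Or.inl (dvd_zero _)
  | coe b =>
    induction c with
    | zero => exact Or.inr (dvd_zero _)
    | coe c =>
      rw [← WithZero.coe_mul] at hbc
      rcases hp.2 b c (coe_dvd'.mp hbc) with h | h
      · exact Or.inl (coe_dvd'.mpr h)
      · exact Or.inr (coe_dvd'.mpr h)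

theorem coe_multiset_prod (l : Multiset H) :
    (l.map (fun p : H => (p : WithZero H))).prod = ((l.prod : H) : WithZero H) := by
  induction l using Multiset.induction with
  | empty => simp
  | cons a s ih => simp [ih]

theorem ufm (hfact : HFact H) : UniqueFactorizationMonoid (WithZero H) := by
  apply UniqueFactorizationMonoid.of_exists_prime_factors
  intro a ha
  induction a with
  | zero => exact absurd rfl ha
  | coe x =>
    rcases hfact x with hx | ⟨l, hl, hprod⟩
    · exact ⟨0, by simp, by
        simpa using (associated_one_iff_isUnit.mpr (isUnit_coe'.mpr hx)).symm⟩
    · refine ⟨l.map (fun p : H => (p : WithZero H)), ?_, ?_⟩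
      · intro b hb
        obtain ⟨p, hp, rfl⟩ := Multiset.mem_map.mp hb
        exact prime_coe (hl p hp)
      · rw [← hprod]
        rw [coe_multiset_prod]


noncomputable def nm (hfact : HFact H) : NormalizationMonoid (WithZero H) :=
  (@UniqueFactorizationMonoid.strongNormalizationMonoid _ _ (ufm hfact)).toNormalizationMonoid

noncomputable def F (hfact : HFact H) (x : H) : Multiset (WithZero H) :=
  @normalizedFactors _ _ (nm hfact) (ufm hfact) (x : WithZero H)

def Good (hfact : HFact H) (m : Multiset (WithZero H)) : Prop :=
  ∀ p ∈ m, Prime p ∧ (@normalize _ _ (nm hfact)) p = p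

theorem Fmul (hfact : HFact H) (x y : H) :
    F hfact (x * y) = F hfact x + F hfact y := by
  letI := ufm hfact; letI := nm hfact
  show normalizedFactors (((x * y : H)) : WithZero H)
      = normalizedFactors (x : WithZero H) + normalizedFactors (y : WithZero H)
  rw [WithZero.coe_mul]
  exact normalizedFactors_mul WithZero.coe_ne_zero WithZero.coe_ne_zero

theorem Fpow (hfact : HFact H) (x : H) (n : ℕ) :
    F hfact (x ^ n) = n • F hfact x := by
  letI := ufm hfact; letI := nm hfact
  show normalizedFactors (((x ^ n : H)) : WithZero H) = n • normalizedFactors (x : WithZero H)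
  rw [WithZero.coe_pow]
  exact normalizedFactors_pow n

theorem Fassoc (hfact : HFact H) {x y : H} (h : F hfact x = F hfact y) :
    Associated x y := by
  letI := ufm hfact; letI := nm hfact
  exact associated_coe'
    ((associated_iff_normalizedFactors_eq_normalizedFactors WithZero.coe_ne_zero
      WithZero.coe_ne_zero).mpr h)

theorem Fsq (hfact : HFact H) {x : H} : Squarefree x ↔ (F hfact x).Nodup := by
  letI := ufm hfact; letI := nm hfact
  rw [← squarefree_coe']
  exact squarefree_iff_nodup_normalizedFactors WithZero.coe_ne_zero

theorem Fdvd (hfact : HFact H) {x y : H} : x ∣ y ↔ F hfact x ≤ F hfact y := by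
  letI := ufm hfact; letI := nm hfact
  rw [← coe_dvd']
  exact dvd_iff_normalizedFactors_le_normalizedFactors WithZero.coe_ne_zero WithZero.coe_ne_zero

theorem Fgood (hfact : HFact H) (x : H) : Good hfact (F hfact x) := by
  letI := ufm hfact; letI := nm hfact
  intro p hp
  exact ⟨prime_of_normalized_factor p hp, normalize_normalized_factor p hp⟩

theorem good_mono (hfact : HFact H) {m m' : Multiset (WithZero H)}
    (h : ∀ p, p ∈ m' → p ∈ m) (hm : Good hfact m) : Good hfact m' :=
  fun p hp => hm p (h p hp)

theorem realize (hfact : HFact H) {m : Multiset (WithZero H)} (hm : Good hfact m) :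
    ∃ x : H, F hfact x = m := by
  letI := ufm hfact; letI := nm hfact
  have h0 : (0 : WithZero H) ∉ m := fun h => (hm 0 h).1.ne_zero rfl
  have hne : m.prod ≠ 0 := Multiset.prod_ne_zero h0
  obtain ⟨x, hx⟩ : ∃ x : H, m.prod = (x : WithZero H) := by
    cases hmp : m.prod with
    | zero => exact absurd hmp hne
    | coe x => exact ⟨x, rfl⟩
  refine ⟨x, ?_⟩
  show normalizedFactors (x : WithZero H) = m
  rw [← hx, normalizedFactors_prod_eq m (fun a ha => (hm a ha).1.irreducible)]
  rw [Multiset.map_congr rfl (fun a ha => (hm a ha).2)]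
  exact Multiset.map_id m


section MS

variable {α : Type*} [DecidableEq α]

noncomputable def hf (m : Multiset α) : Multiset α :=
  (m.toFinsupp.mapRange (· / 2) (by simp)).toMultiset

noncomputable def pr (m : Multiset α) : Multiset α :=
  (m.toFinsupp.mapRange (· % 2) (by simp)).toMultiset

def lay (k : ℕ) (m : Multiset α) : Multiset α := (m - k • m.dedup).dedup

theorem count_hf (m : Multiset α) (p : α) : (hf m).count p = m.count p / 2 := by
  simp [hf, Finsupp.count_toMultiset, Finsupp.mapRange_apply]

theorem count_pr (m : Multiset α) (p : α) : (pr m).count p = m.count p % 2 := by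
  simp [pr, Finsupp.count_toMultiset, Finsupp.mapRange_apply]

theorem count_lay (k : ℕ) (m : Multiset α) (p : α) :
    (lay k m).count p = if k + 1 ≤ m.count p then 1 else 0 := by
  rw [lay, Multiset.count_dedup]
  have hmem : p ∈ m - k • m.dedup ↔ 0 < m.count p - k * (if p ∈ m then 1 else 0) := by
    rw [← Multiset.count_pos, Multiset.count_sub, Multiset.count_nsmul, Multiset.count_dedup]
  by_cases hm : p ∈ m
  · rw [if_pos hm] at hmem
    have hc : 0 < m.count p := Multiset.count_pos.mpr hm
    by_cases h : k + 1 ≤ m.count p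
    · rw [if_pos h, if_pos (hmem.mpr (by omega))]
    · rw [if_neg h, if_neg (fun hx => by have := hmem.mp hx; omega)]
  · have hc : m.count p = 0 := Multiset.count_eq_zero_of_notMem hm
    rw [if_neg (fun hx => hm (Multiset.mem_of_le tsub_le_self hx)), if_neg (by omega)]

theorem ms_parity (m : Multiset α) : 2 • hf m + pr m = m := by
  ext p
  rw [Multiset.count_add, Multiset.count_nsmul, count_hf, count_pr]
  omega

theorem pr_nodup (m : Multiset α) : (pr m).Nodup := by
  rw [Multiset.nodup_iff_count_le_one]
  intro a; rw [count_pr]; omega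

theorem hf_zero_nodup {m : Multiset α} (h : hf m = 0) : m.Nodup := by
  rw [Multiset.nodup_iff_count_le_one]
  intro a
  have h2 := count_hf m a
  rw [h] at h2
  simp only [Multiset.count_zero] at h2
  omega

theorem card_lt {m : Multiset α} (h : hf m ≠ 0) :
    (hf m + pr m).card < m.card := by
  have h1 : m.card = (2 • hf m + pr m).card := by rw [ms_parity]
  rw [Multiset.card_add] at h1 ⊢
  rw [Multiset.card_nsmul] at h1
  have h2 : 0 < (hf m).card := Multiset.card_pos.mpr h
  omega

theorem ded_hf_pr (m : Multiset α) : (hf m + pr m).dedup = m.dedup := by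
  ext p
  rw [Multiset.count_dedup, Multiset.count_dedup]
  have hiff : p ∈ hf m + pr m ↔ p ∈ m := by
    rw [← Multiset.count_pos, ← Multiset.count_pos, Multiset.count_add, count_hf, count_pr]
    omega
  by_cases hm : p ∈ m
  · rw [if_pos (hiff.mpr hm), if_pos hm]
  · rw [if_neg (fun hx => hm (hiff.mp hx)), if_neg hm]

theorem sub_ded_le (m : Multiset α) {n : ℕ} (h : m.card ≤ n) :
    m - m.dedup ≤ n • m.dedup := by
  rw [Multiset.le_iff_count]
  intro a
  rw [Multiset.count_sub, Multiset.count_nsmul, Multiset.count_dedup]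
  have hle := Multiset.count_le_card a m
  by_cases hm : a ∈ m
  · rw [if_pos hm]; omega
  · rw [if_neg hm]
    have h0 : m.count a = 0 := Multiset.count_eq_zero_of_notMem hm
    omega

theorem ded_add_eq {v w : Multiset α} (hw : w.Nodup) (h : ∀ p ∈ v, p ∈ w) :
    (v + w).dedup = w := by
  ext p
  rw [Multiset.count_dedup]
  by_cases hp : p ∈ w
  · rw [if_pos (Multiset.mem_add.mpr (Or.inr hp)), Multiset.count_eq_one_of_mem hw hp]
  · have h0 : p ∉ v + w := by
      rw [Multiset.mem_add]
      rintro (h' | h')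
      · exact hp (h p h')
      · exact hp h'
    rw [if_neg h0, Multiset.count_eq_zero_of_notMem hp]

theorem lay_sub (k : ℕ) (m : Multiset α) : lay k (m - m.dedup) = lay (k + 1) m := by
  ext p
  rw [count_lay, count_lay, Multiset.count_sub, Multiset.count_dedup]
  by_cases hm : p ∈ m
  · rw [if_pos hm]
    have hc : 0 < m.count p := Multiset.count_pos.mpr hm
    split_ifs <;> omega
  · rw [if_neg hm]
    have hc : m.count p = 0 := Multiset.count_eq_zero_of_notMem hm
    split_ifs <;> omega

theorem lay_even {v w : Multiset α} (hw : w.Nodup) (k : ℕ) :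
    lay (2 * k + 1) (2 • v + w) = lay k v := by
  ext p
  rw [count_lay, count_lay, Multiset.count_add, Multiset.count_nsmul]
  have hwp : w.count p ≤ 1 := Multiset.nodup_iff_count_le_one.mp hw p
  split_ifs <;> omega

theorem lay_odd {v w : Multiset α} (hw : w.Nodup) (k : ℕ) :
    lay (2 * k) (2 • v + w) = lay k (v + w) := by
  ext p
  rw [count_lay, count_lay, Multiset.count_add, Multiset.count_add, Multiset.count_nsmul]
  have hwp : w.count p ≤ 1 := Multiset.nodup_iff_count_le_one.mp hw p
  split_ifs <;> omega

theorem sum_ite_min (e N : ℕ) :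
    (∑ k ∈ Finset.range N, if k + 1 ≤ e then 1 else 0) = min e N := by
  induction N with
  | zero => simp
  | succ n ih => rw [Finset.sum_range_succ, ih]; split_ifs <;> omega

theorem sum_layers {v : Multiset α} {N : ℕ} (h : v.card ≤ N) :
    (∑ k ∈ Finset.range N, lay k v) = v := by
  ext p
  have hcount : (∑ k ∈ Finset.range N, lay k v).count p
      = ∑ k ∈ Finset.range N, (lay k v).count p := by
    rw [← Multiset.coe_countAddMonoidHom, map_sum]
  rw [hcount]
  have hle := Multiset.count_le_card p v
  rw [Finset.sum_congr rfl (fun k _ => count_lay k v p), sum_ite_min]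
  omega

theorem mem_hf {m : Multiset α} {p : α} (h : p ∈ hf m) : p ∈ m := by
  rw [← Multiset.count_pos] at h ⊢
  rw [count_hf] at h
  omega

theorem mem_pr {m : Multiset α} {p : α} (h : p ∈ pr m) : p ∈ m := by
  rw [← Multiset.count_pos] at h ⊢
  rw [count_pr] at h
  omega

theorem mem_lay {k : ℕ} {m : Multiset α} {p : α} (h : p ∈ lay k m) : p ∈ m := by
  rw [← Multiset.count_pos] at h ⊢
  rw [count_lay] at h
  split_ifs at h <;> omega

theorem mem_sub_self {m m' : Multiset α} {p : α} (h : p ∈ m - m') : p ∈ m :=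
  Multiset.mem_of_le tsub_le_self h

end MS


section Main
set_option linter.unusedSectionVars false

variable {H : Type*} [CancelCommMonoid H] [DecidableEq (WithZero H)]

theorem F1 (hfact : HFact H) : F hfact 1 = 0 := by
  letI := ufm hfact; letI := nm hfact
  show normalizedFactors ((1 : H) : WithZero H) = 0
  rw [WithZero.coe_one]
  exact normalizedFactors_one

theorem claimA (hfact : HFact H) (M : Submonoid H) (hunits : ∀ u : H, IsUnit u → u ∈ M)
    (hi : ∀ a b : H, Squarefree b → a ^ 2 * b ∈ M → a ∈ M ∧ a * b ∈ M) :
    ∀ (n : ℕ) (z : H), (F hfact z).card ≤ n → z ∈ M →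
      ∃ s r : H, s * r = z ∧ s ∈ M ∧ r ∈ M ∧ F hfact r = (F hfact z).dedup := by
  intro n
  induction n with
  | zero =>
    intro z hcard hz
    have hm : F hfact z = 0 := Multiset.card_eq_zero.mp (Nat.le_zero.mp hcard)
    refine ⟨1, z, one_mul z, M.one_mem, hz, ?_⟩
    rw [Multiset.dedup_eq_self.mpr (hm ▸ Multiset.nodup_zero)]
  | succ n ih =>
    intro z hcard hz
    by_cases h0 : hf (F hfact z) = 0
    · have hnd : (F hfact z).Nodup := hf_zero_nodup h0
      exact ⟨1, z, one_mul z, M.one_mem, hz, by rw [Multiset.dedup_eq_self.mpr hnd]⟩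
    · obtain ⟨x, hx⟩ := realize hfact
        (good_mono hfact (fun p hp => mem_hf hp) (Fgood hfact z))
      obtain ⟨y, hy⟩ := realize hfact
        (good_mono hfact (fun p hp => mem_pr hp) (Fgood hfact z))
      have hxy : F hfact (x ^ 2 * y) = F hfact z := by
        rw [Fmul, Fpow, hx, hy, ms_parity]
      have hassoc : Associated (x ^ 2 * y) z := Fassoc hfact hxy
      have hmem : x ^ 2 * y ∈ M := memM_assoc M hunits hz hassoc.symm
      have hysq : Squarefree y := (Fsq hfact).mpr (hy ▸ pr_nodup _)
      obtain ⟨hxM, hxyM⟩ := hi x y hysq hmem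
      have hcard2 : (F hfact (x * y)).card ≤ n := by
        rw [Fmul, hx, hy]
        have h3 := card_lt h0
        omega
      obtain ⟨s', r', hsr, hs'M, hr'M, hFr'⟩ := ih (x * y) hcard2 hxyM
      have hFr : F hfact r' = (F hfact z).dedup := by
        rw [hFr', Fmul, hx, hy, ded_hf_pr]
      obtain ⟨u, hu⟩ := hassoc
      refine ⟨x * s' * ↑u, r', ?_, M.mul_mem (M.mul_mem hxM hs'M) (hunits _ u.isUnit),
        hr'M, hFr⟩
      calc x * s' * ↑u * r' = x * (s' * r') * ↑u := by ac_rfl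
        _ = x * (x * y) * ↑u := by rw [hsr]
        _ = x ^ 2 * y * ↑u := by rw [pow_two]; ac_rfl
        _ = z := hu

theorem lemV_step (hfact : HFact H) (M : Submonoid H) (hunits : ∀ u : H, IsUnit u → u ∈ M)
    (hv : ∀ a b : H, Squarefree b → (∃ n : ℕ, 1 ≤ n ∧ a ∣ b ^ n) →
      a * b ∈ M → a ∈ M ∧ b ∈ M)
    {z : H} (hz : z ∈ M) :
    (∃ r ∈ M, F hfact r = (F hfact z).dedup) ∧
    (∃ s ∈ M, F hfact s = F hfact z - (F hfact z).dedup) := by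
  obtain ⟨r, hr⟩ := realize hfact
    (good_mono hfact (fun p hp => Multiset.mem_dedup.mp hp) (Fgood hfact z))
  obtain ⟨s, hs⟩ := realize hfact
    (good_mono hfact (fun p hp => mem_sub_self hp) (Fgood hfact z))
  have hrs : F hfact (s * r) = F hfact z := by
    rw [Fmul, hs, hr, tsub_add_cancel_of_le (Multiset.dedup_le _)]
  have hmem : s * r ∈ M := memM_assoc M hunits hz (Fassoc hfact hrs).symm
  have hrsq : Squarefree r := (Fsq hfact).mpr (hr ▸ Multiset.nodup_dedup _)
  have hdvd : s ∣ r ^ ((F hfact z).card + 1) := by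
    rw [Fdvd hfact, Fpow, hr, hs]
    exact sub_ded_le _ (Nat.le_succ _)
  obtain ⟨hsM, hrM⟩ := hv s r hrsq
    ⟨(F hfact z).card + 1, Nat.succ_le_succ (Nat.zero_le _), hdvd⟩ hmem
  exact ⟨⟨r, hrM, hr⟩, ⟨s, hsM, hs⟩⟩

theorem lemL (hfact : HFact H) (M : Submonoid H) (hunits : ∀ u : H, IsUnit u → u ∈ M)
    (hv : ∀ a b : H, Squarefree b → (∃ n : ℕ, 1 ≤ n ∧ a ∣ b ^ n) →
      a * b ∈ M → a ∈ M ∧ b ∈ M) :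
    ∀ (k : ℕ) (z : H), z ∈ M → ∃ x ∈ M, F hfact x = lay k (F hfact z) := by
  intro k
  induction k with
  | zero =>
    intro z hz
    obtain ⟨⟨r, hrM, hr⟩, -⟩ := lemV_step hfact M hunits hv hz
    exact ⟨r, hrM, by rw [hr]; simp [lay]⟩
  | succ k ih =>
    intro z hz
    obtain ⟨-, ⟨s, hsM, hs⟩⟩ := lemV_step hfact M hunits hv hz
    obtain ⟨x, hxM, hx⟩ := ih s hsM
    exact ⟨x, hxM, by rw [hx, hs, lay_sub]⟩

theorem prodM (hfact : HFact H) (M : Submonoid H) :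
    ∀ (N : ℕ) (g : ℕ → Multiset (WithZero H)),
    (∀ k, k < N → ∃ x ∈ M, F hfact x = g k) →
    ∃ x ∈ M, F hfact x = ∑ k ∈ Finset.range N, g k := by
  intro N
  induction N with
  | zero => intro g _; exact ⟨1, M.one_mem, by rw [F1]; simp⟩
  | succ n ih =>
    intro g hg
    obtain ⟨x, hxM, hx⟩ := ih g (fun k hk => hg k (lt_of_lt_of_le hk (Nat.le_succ n)))
    obtain ⟨y, hyM, hy⟩ := hg n (Nat.lt_succ_self n)
    exact ⟨x * y, M.mul_mem hxM hyM, by rw [Fmul, hx, hy, Finset.sum_range_succ]⟩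

theorem main (hfact : HFact H) (M : Submonoid H) (hunits : ∀ u : H, IsUnit u → u ∈ M) :
    (∀ a b : H, Squarefree b → a ^ 2 * b ∈ M → a ∈ M ∧ a * b ∈ M) ↔
    (∀ a b : H, Squarefree b → (∃ n : ℕ, 1 ≤ n ∧ a ∣ b ^ n) →
      a * b ∈ M → a ∈ M ∧ b ∈ M) := by
  constructor
  · intro hi a b hb hdvd' hab
    obtain ⟨n, hn1, hdvd⟩ := hdvd'
    obtain ⟨s, r, hsr, hsM, hrM, hFr⟩ :=
      claimA hfact M hunits hi (F hfact (a * b)).card (a * b) le_rfl hab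
    have hFb_nodup : (F hfact b).Nodup := (Fsq hfact).mp hb
    have hsupp : ∀ p ∈ F hfact a, p ∈ F hfact b := by
      intro p hp
      have h1 : F hfact a ≤ n • F hfact b := by
        rw [← Fpow]; exact (Fdvd hfact).mp hdvd
      have h2 := Multiset.le_iff_count.mp h1 p
      rw [Multiset.count_nsmul] at h2
      rw [← Multiset.count_pos] at hp ⊢
      rcases Nat.eq_zero_or_pos ((F hfact b).count p) with h3 | h3
      · rw [h3, mul_zero] at h2; omega
      · exact h3
    have hdd : (F hfact (a * b)).dedup = F hfact b := by
      rw [Fmul]; exact ded_add_eq hFb_nodup hsupp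
    rw [hdd] at hFr
    have hrb : Associated r b := Fassoc hfact hFr
    have hbM : b ∈ M := memM_assoc M hunits hrM hrb
    obtain ⟨u, hu⟩ := hrb
    have h4 : s * r = a * ↑u * r := by rw [hsr, ← hu]; ac_rfl
    have h5 : s = a * ↑u := mul_right_cancel h4
    have h6 : a = s * ↑u⁻¹ := by rw [h5, mul_assoc, Units.mul_inv, mul_one]
    refine ⟨?_, hbM⟩
    rw [h6]
    exact M.mul_mem hsM (hunits _ u⁻¹.isUnit)
  · intro hv a b hb hz
    have hFb_nodup : (F hfact b).Nodup := (Fsq hfact).mp hb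
    have hm : F hfact (a ^ 2 * b) = 2 • F hfact a + F hfact b := by rw [Fmul, Fpow]
    have hlay : ∀ k : ℕ, ∃ x ∈ M, F hfact x = lay k (2 • F hfact a + F hfact b) := by
      intro k
      obtain ⟨x, hxM, hx⟩ := lemL hfact M hunits hv k (a ^ 2 * b) hz
      exact ⟨x, hxM, by rw [hx, hm]⟩
    constructor
    · obtain ⟨x, hxM, hx⟩ := prodM hfact M (F hfact a).card (fun k => lay k (F hfact a))
        (fun k _ => by
          obtain ⟨x, hxM, hx⟩ := hlay (2 * k + 1)
          exact ⟨x, hxM, by rw [hx, lay_even hFb_nodup]⟩)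
      rw [sum_layers le_rfl] at hx
      exact memM_assoc M hunits hxM (Fassoc hfact hx)
    · obtain ⟨x, hxM, hx⟩ := prodM hfact M (F hfact a + F hfact b).card
        (fun k => lay k (F hfact a + F hfact b))
        (fun k _ => by
          obtain ⟨x, hxM, hx⟩ := hlay (2 * k)
          exact ⟨x, hxM, by rw [hx, lay_odd hFb_nodup]⟩)
      rw [sum_layers le_rfl, ← Fmul] at hx
      exact memM_assoc M hunits hxM (Fassoc hfact hx)

end Main

end Stmt7Aux

theorem stmt_7 {H : Type*} [CancelCommMonoid H]
    (hfact : ∀ a : H, IsUnit a ∨ ∃ l : Multiset H, (∀ p ∈ l, ¬ IsUnit p ∧ ∀ b c : H, p ∣ b * c → p ∣ b ∨ p ∣ c) ∧ l.prod = a)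
    (M : Submonoid H) (hunits : ∀ u : H, IsUnit u → u ∈ M) :
    (∀ a b : H, Squarefree b → a ^ 2 * b ∈ M → a ∈ M ∧ a * b ∈ M) ↔
    (∀ a b : H, Squarefree b → (∃ n : ℕ, 1 ≤ n ∧ a ∣ b ^ n) →
      a * b ∈ M → a ∈ M ∧ b ∈ M) := by
  letI : DecidableEq (WithZero H) := Classical.decEq _
  exact Stmt7Aux.main hfact M hunits
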